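/- With ϑ the unique root of -log x - 2 + 2x = 0 in (0,1), for every integer n > 1 the maximum over integers r ∈ [0,n] of P(r,n) = Σ_{i=r+1}^{n} 2(i-r)r/(i(i-1)n) is strictly greater than 2(ϑ - ϑ²). -/

import Mathlib

/-- The success probability of the cutoff strategy `r` when the number of objects is
uniform on `[1,n]` in the best-or-worst secretary problem. -/
noncomputable def uniformProb (r n : ℕ) : ℝ :=
  ∑ i ∈ Finset.Icc (r + 1) n, 2 * ((i : ℝ) - r) * r / (i * (i - 1) * n)

/- ### Auxiliary lemmas -/

lemma aux_sinh (t : ℝ) (ht : 0 ≤ t) : 2*t ≤ Real.exp t - Real.exp (-t) := by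
  have hq : 1 + t + t^2/2 ≤ Real.exp t := by
    have h := Real.sum_le_exp_of_nonneg ht 3
    simp [Finset.sum_range_succ] at h
    linarith
  have hA : (0:ℝ) < 1 + t + t^2/2 := by positivity
  have hinv : Real.exp (-t) ≤ 1/(1 + t + t^2/2) := by
    rw [Real.exp_neg, inv_eq_one_div]
    exact one_div_le_one_div_of_le hA hq
  have hkey : 2*t ≤ (1 + t + t^2/2) - 1/(1 + t + t^2/2) := by
    rw [← sub_nonneg]
    have h : (1 + t + t^2/2) - 1/(1 + t + t^2/2) - 2*t = t^4/(4*(1 + t + t^2/2)) := by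
      field_simp
      ring
    rw [h]
    positivity
  linarith

lemma aux_log_le (y : ℝ) (hy : 1 ≤ y) : Real.log y ≤ (y - 1/y)/2 := by
  have hy0 : 0 < y := by linarith
  have h := aux_sinh (Real.log y) (Real.log_nonneg hy)
  rw [Real.exp_log hy0, Real.exp_neg, Real.exp_log hy0, inv_eq_one_div] at h
  linarith

lemma aux_perterm (n : ℕ) (hn : 1 ≤ n) :
    Real.log ((n:ℝ)+1) - Real.log n + 1/(2*n) - 1/(2*((n:ℝ)+1)) ≤ 1/(n:ℝ) := by
  have hn0 : (0:ℝ) < n := by exact_mod_cast hn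
  have hy : (1:ℝ) ≤ ((n:ℝ)+1)/n := by
    rw [le_div_iff₀ hn0]; linarith
  have h := aux_log_le _ hy
  rw [Real.log_div (by positivity) hn0.ne'] at h
  have key : ((((n:ℝ)+1)/n) - 1/(((n:ℝ)+1)/n))/2 = 1/(n:ℝ) - 1/(2*n) + 1/(2*((n:ℝ)+1)) := by
    field_simp
    ring
  linarith [key ▸ h]

lemma aux_harmonic (r : ℕ) (hr : 1 ≤ r) (n : ℕ) (hrn : r ≤ n) :
    Real.log n - Real.log r + 1/(2*(r:ℝ)) - 1/(2*(n:ℝ)) ≤ ∑ j ∈ Finset.Ico r n, (1:ℝ)/j := by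
  induction n, hrn using Nat.le_induction with
  | base => simp
  | succ n hn ih =>
    rw [Finset.sum_Ico_succ_top hn]
    have h2 := aux_perterm n (le_trans hr hn)
    push_cast
    push_cast at ih h2
    linarith

lemma aux_Qsum (r : ℕ) (hr : 1 ≤ r) (n : ℕ) (hrn : r ≤ n) :
    ∑ i ∈ Finset.Icc (r + 1) n, 2 * ((i : ℝ) - r) * r / (i * ((i:ℝ) - 1)) =
      2*r*(∑ j ∈ Finset.Ico r n, (1:ℝ)/j) - 2*r + 2*(r:ℝ)^2/n := by
  have hr0 : (0:ℝ) < r := by exact_mod_cast hr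
  induction n, hrn using Nat.le_induction with
  | base =>
    rw [Finset.Icc_eq_empty (by omega), Finset.Ico_self]
    simp
    field_simp
    ring
  | succ n hn ih =>
    rw [Finset.sum_Icc_succ_top (by omega), Finset.sum_Ico_succ_top hn, ih]
    have hn0 : (0:ℝ) < n := lt_of_lt_of_le hr0 (by exact_mod_cast hn)
    push_cast
    have hn0' : (n:ℝ) ≠ 0 := hn0.ne'
    field_simp
    ring_nf
    field_simp
    ring

lemma aux_closed (r : ℕ) (hr : 1 ≤ r) (n : ℕ) (hrn : r ≤ n) :
    uniformProb r n = 2*r/n * ((∑ j ∈ Finset.Ico r n, (1:ℝ)/j) - 1 + r/n) := by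
  have h1 : uniformProb r n
      = (∑ i ∈ Finset.Icc (r + 1) n, 2 * ((i : ℝ) - r) * r / (i * ((i:ℝ) - 1))) * (1/(n:ℝ)) := by
    rw [uniformProb, Finset.sum_mul]
    apply Finset.sum_congr rfl
    intro i _
    rw [mul_one_div, div_div]
  rw [h1, aux_Qsum r hr n hrn]
  ring

lemma aux_log5 : (8:ℝ)/5 < Real.log 5 := by
  rw [Real.lt_log_iff_exp_lt (by norm_num : (0:ℝ) < 5)]
  have h1 : Real.exp (8/5) ^ (5:ℕ) = Real.exp 8 := by
    rw [← Real.exp_nat_mul]; norm_num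
  have h2 : Real.exp 8 = Real.exp 1 ^ (8:ℕ) := by
    rw [← Real.exp_nat_mul]; norm_num
  have h3 : Real.exp 1 ^ (8:ℕ) < 2.7182818286 ^ (8:ℕ) := by
    apply pow_lt_pow_left₀ Real.exp_one_lt_d9 (Real.exp_pos 1).le
    norm_num
  have h4 : (2.7182818286:ℝ) ^ (8:ℕ) < 5 ^ (5:ℕ) := by norm_num
  have h5 : Real.exp (8/5) ^ (5:ℕ) < 5 ^ (5:ℕ) := by
    rw [h1, h2]; linarith
  exact lt_of_pow_lt_pow_left₀ 5 (by norm_num) h5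

lemma aux_log21 : -(79:ℝ)/50 < Real.log (21/100) := by
  have key : Real.log (100/21) < 79/50 := by
    rw [Real.log_lt_iff_lt_exp (by norm_num)]
    have h1 : Real.exp (79/50) ^ (50:ℕ) = Real.exp 79 := by
      rw [← Real.exp_nat_mul]; norm_num
    have h2 : Real.exp 79 = Real.exp 1 ^ (79:ℕ) := by
      rw [← Real.exp_nat_mul]; norm_num
    have h3 : (2.7182818283:ℝ) ^ (79:ℕ) ≤ Real.exp 1 ^ (79:ℕ) :=
      pow_le_pow_left₀ (by norm_num) Real.exp_one_gt_d9.le 79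
    have h4 : ((100:ℝ)/21) ^ (50:ℕ) < (2.7182818283:ℝ) ^ (79:ℕ) := by norm_num
    have h5 : ((100:ℝ)/21) ^ (50:ℕ) < Real.exp (79/50) ^ (50:ℕ) := by
      rw [h1, h2]; linarith
    exact lt_of_pow_lt_pow_left₀ 50 (Real.exp_pos _).le h5
  have h : Real.log (21/100) = -Real.log (100/21) := by
    rw [← Real.log_inv]; norm_num
  rw [h]; linarith

lemma aux_lower (ϑ : ℝ) (hϑ : ϑ ∈ Set.Ioo (0:ℝ) 1) (heq : Real.log ϑ = 2*ϑ - 2) :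
    1/5 < ϑ := by
  have h1 : Real.log (ϑ/(1/5)) ≤ ϑ/(1/5) - 1 :=
    Real.log_le_sub_one_of_pos (div_pos hϑ.1 (by norm_num))
  rw [Real.log_div hϑ.1.ne' (by norm_num), show ϑ/(1/5:ℝ) = 5*ϑ by ring] at h1
  have h2 : Real.log (1/5:ℝ) = -Real.log 5 := by
    rw [← Real.log_inv]; norm_num
  rw [heq, h2] at h1
  have := aux_log5
  linarith

lemma aux_upper (ϑ : ℝ) (hϑ : ϑ ∈ Set.Ioo (0:ℝ) 1) (heq : Real.log ϑ = 2*ϑ - 2) :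
    ϑ < 21/100 := by
  set s := Real.sqrt ϑ with hs
  have hs0 : 0 < s := Real.sqrt_pos.mpr hϑ.1
  have hs2 : s^2 = ϑ := Real.sq_sqrt hϑ.1.le
  have hlogs : Real.log ϑ = 2 * Real.log s := by
    rw [hs, Real.log_sqrt hϑ.1.le]; ring
  have hls : 1 - s⁻¹ ≤ Real.log s := by
    have := Real.log_le_sub_one_of_pos (show (0:ℝ) < s⁻¹ by positivity)
    rw [Real.log_inv] at this
    linarith
  have h2 : (0:ℝ) ≤ 2*ϑ - 4 + 2*s⁻¹ := by
    rw [heq] at hlogs; linarith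
  have e : s*(2*ϑ - 4 + 2*s⁻¹) = 2*s^3 - 4*s + 2 := by
    rw [← hs2]; field_simp
  have hcub : 0 ≤ s^3 - 2*s + 1 := by
    have := mul_nonneg hs0.le h2
    rw [e] at this; linarith
  have hs1 : s < 1 := by nlinarith [hϑ.2, hs2, hs0]
  have hsq : s^2 + s ≤ 1 := by nlinarith [hcub, hs1]
  have hhalf : ϑ < 1/2 := by nlinarith [hs2, hsq, hs0, sq_nonneg (s - 3/5)]
  by_contra hcon
  push_neg at hcon
  have h1 : Real.log ((21/100)/ϑ) ≤ (21/100)/ϑ - 1 :=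
    Real.log_le_sub_one_of_pos (div_pos (by norm_num) hϑ.1)
  rw [Real.log_div (by norm_num) hϑ.1.ne', heq] at h1
  have hl21 := aux_log21
  have h3 : (-79/50 - (2*ϑ - 2))*ϑ < (21/100/ϑ - 1)*ϑ := by
    apply mul_lt_mul_of_pos_right _ hϑ.1
    linarith
  have e3 : ((21:ℝ)/100/ϑ - 1)*ϑ = 21/100 - ϑ := by field_simp
  rw [e3] at h3
  nlinarith [h3, hcon, hhalf, mul_nonneg (sub_nonneg.mpr hcon) (by linarith : (0:ℝ) ≤ 1/2 - ϑ)]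

lemma aux_e1 (a N t : ℝ) (ha : a ≠ 0) (hN : N ≠ 0) (ht : t ≠ 0) :
    2*a/N * (((3 - 2*t - (a/N)/t) + 1/(2*a) - 1/(2*N)) - 1 + a/N)
      = 2*(t - t^2) - (2/t - 2)*(a/N - t)^2 + (N - a)/N^2 := by
  field_simp
  ring

set_option maxHeartbeats 2000000 in
theorem stmt_11 (ϑ : ℝ) (hϑ : ϑ ∈ Set.Ioo (0 : ℝ) 1)
    (heq : Real.log ϑ = 2 * ϑ - 2) (n : ℕ) (hn : 1 < n) :
    2 * (ϑ - ϑ ^ 2) <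
      (Finset.Icc 0 n).sup' ⟨0, Finset.mem_Icc.2 ⟨le_rfl, Nat.zero_le n⟩⟩
        (fun r => uniformProb r n) := by
  have hϑ5 : 1/5 < ϑ := aux_lower ϑ hϑ (by linarith [heq])
  have hϑ21 : ϑ < 21/100 := aux_upper ϑ hϑ (by linarith [heq])
  rcases lt_or_ge n 12 with h12 | h12
  · -- small cases n = 2,…,11 : use r = 1
    have hmem : (1:ℕ) ∈ Finset.Icc 0 n := Finset.mem_Icc.mpr ⟨Nat.zero_le _, hn.le⟩
    refine lt_of_lt_of_le ?_ (Finset.le_sup' (fun r => uniformProb r n) hmem)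
    show 2*(ϑ - ϑ^2) < uniformProb 1 n
    have hub : 2*(ϑ - ϑ^2) < 3318/10000 := by
      nlinarith [mul_pos (sub_pos.mpr hϑ21) (by linarith : (0:ℝ) < 79/100 - ϑ)]
    refine hub.trans_le ?_
    interval_cases n
    · rw [uniformProb, show Finset.Icc (1+1) 2 = ({2}:Finset ℕ) by decide]
      norm_num
    · rw [uniformProb, show Finset.Icc (1+1) 3 = ({2,3}:Finset ℕ) by decide]
      norm_num
    · rw [uniformProb, show Finset.Icc (1+1) 4 = ({2,3,4}:Finset ℕ) by decide]
      norm_num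
    · rw [uniformProb, show Finset.Icc (1+1) 5 = ({2,3,4,5}:Finset ℕ) by decide]
      norm_num
    · rw [uniformProb, show Finset.Icc (1+1) 6 = ({2,3,4,5,6}:Finset ℕ) by decide]
      norm_num
    · rw [uniformProb, show Finset.Icc (1+1) 7 = ({2,3,4,5,6,7}:Finset ℕ) by decide]
      norm_num
    · rw [uniformProb, show Finset.Icc (1+1) 8 = ({2,3,4,5,6,7,8}:Finset ℕ) by decide]
      norm_num
    · rw [uniformProb, show Finset.Icc (1+1) 9 = ({2,3,4,5,6,7,8,9}:Finset ℕ) by decide]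
      norm_num
    · rw [uniformProb, show Finset.Icc (1+1) 10 = ({2,3,4,5,6,7,8,9,10}:Finset ℕ) by decide]
      norm_num
    · rw [uniformProb, show Finset.Icc (1+1) 11 = ({2,3,4,5,6,7,8,9,10,11}:Finset ℕ) by decide]
      norm_num
  · -- main case n ≥ 12 : use r = ⌈ϑ n⌉
    have hN : (12:ℝ) ≤ n := by exact_mod_cast h12
    have hn0 : (0:ℝ) < n := by linarith
    set r := ⌈ϑ * n⌉₊ with hrdef
    have hϑn0 : 0 < ϑ * n := mul_pos hϑ.1 hn0
    have hr1 : 1 ≤ r := Nat.ceil_pos.mpr hϑn0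
    have hr0 : (0:ℝ) < r := by exact_mod_cast hr1
    have hrl : ϑ * n ≤ r := Nat.le_ceil _
    have hru : (r:ℝ) < ϑ * n + 1 := Nat.ceil_lt_add_one hϑn0.le
    have hmul : ϑ * n < (21/100) * n := mul_lt_mul_of_pos_right hϑ21 hn0
    have hrnR : (r:ℝ) < n := by linarith
    have hrn : r ≤ n := by exact_mod_cast (Nat.cast_lt (α:=ℝ)).mp hrnR |>.le
    have hmem : r ∈ Finset.Icc 0 n := Finset.mem_Icc.mpr ⟨Nat.zero_le _, hrn⟩
    refine lt_of_lt_of_le ?_ (Finset.le_sup' (fun r => uniformProb r n) hmem)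
    show 2*(ϑ - ϑ^2) < uniformProb r n
    rw [aux_closed r hr1 n hrn]
    have hS := aux_harmonic r hr1 n hrn
    have hL0 := Real.log_le_sub_one_of_pos (show (0:ℝ) < (r:ℝ)/n/ϑ by positivity)
    rw [Real.log_div (by positivity : ((r:ℝ)/n) ≠ 0) hϑ.1.ne',
      Real.log_div hr0.ne' hn0.ne', heq] at hL0
    have hfac : (0:ℝ) ≤ 2*(r:ℝ)/n := by positivity
    have step1 : 2*(r:ℝ)/n * ((Real.log n - Real.log r + 1/(2*(r:ℝ)) - 1/(2*(n:ℝ))) - 1 + r/n)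
        ≤ 2*(r:ℝ)/n * ((∑ j ∈ Finset.Ico r n, (1:ℝ)/j) - 1 + r/n) := by
      apply mul_le_mul_of_nonneg_left _ hfac
      linarith [hS]
    refine lt_of_lt_of_le ?_ step1
    have step2 : 2*(r:ℝ)/n * (((3 - 2*ϑ - ((r:ℝ)/n)/ϑ) + 1/(2*(r:ℝ)) - 1/(2*(n:ℝ))) - 1 + r/n)
        ≤ 2*(r:ℝ)/n * ((Real.log n - Real.log r + 1/(2*(r:ℝ)) - 1/(2*(n:ℝ))) - 1 + r/n) := by
      apply mul_le_mul_of_nonneg_left _ hfac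
      linarith [hL0]
    refine lt_of_lt_of_le ?_ step2
    have e1 : 2*(r:ℝ)/n * (((3 - 2*ϑ - ((r:ℝ)/n)/ϑ) + 1/(2*(r:ℝ)) - 1/(2*(n:ℝ))) - 1 + r/n)
        = 2*(ϑ - ϑ^2) - (2/ϑ - 2)*((r:ℝ)/n - ϑ)^2 + ((n:ℝ) - r)/(n:ℝ)^2 :=
      aux_e1 (r:ℝ) (n:ℝ) ϑ hr0.ne' hn0.ne' hϑ.1.ne'
    rw [e1]
    have hd1 : 0 ≤ (r:ℝ)/n - ϑ := by
      rw [sub_nonneg, le_div_iff₀ hn0]; exact hrl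
    have hd2 : (r:ℝ)/n - ϑ < 1/n := by
      have h1 : (r:ℝ)/n < (ϑ*n + 1)/n := by gcongr
      have h2 : (ϑ*n + 1)/n = ϑ + 1/n := by field_simp
      linarith
    have hc8 : 2/ϑ - 2 < 8 := by
      have h : 2/ϑ < 10 := by rw [div_lt_iff₀ hϑ.1]; linarith
      linarith
    have hc0 : 0 ≤ 2/ϑ - 2 := by
      have h : 2 ≤ 2/ϑ := by rw [le_div_iff₀ hϑ.1]; nlinarith [hϑ.2]
      linarith
    have hna : 8 < (n:ℝ) - r := by linarith
    have hp : (0:ℝ) < 1/(n:ℝ) := by positivity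
    have hprod : 0 < (1/(n:ℝ) - ((r:ℝ)/n - ϑ)) * (1/(n:ℝ) + ((r:ℝ)/n - ϑ)) :=
      mul_pos (by linarith) (by linarith)
    have hdsq : ((r:ℝ)/n - ϑ)^2 < (1/(n:ℝ))^2 := by nlinarith [hprod]
    have hlhs : (2/ϑ - 2)*((r:ℝ)/n - ϑ)^2 < 8*(1/(n:ℝ))^2 := by
      nlinarith [hdsq, hc8, hc0, sq_nonneg ((r:ℝ)/n - ϑ), hp]
    have h8 : 8*(1/(n:ℝ))^2 < ((n:ℝ) - r)/(n:ℝ)^2 := by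
      have e2 : ((n:ℝ) - r)/(n:ℝ)^2 - 8*(1/(n:ℝ))^2 = ((n:ℝ) - r - 8)/(n:ℝ)^2 := by
        field_simp
      have e3 : (0:ℝ) < ((n:ℝ) - r - 8)/(n:ℝ)^2 := div_pos (by linarith) (by positivity)
      linarith
    linarith [hlhs, h8]
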